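/- With $w(y) = -|y|$, $r \geq 0$, and $u_r(x) = \sup_{|x-y|\leq r} w(y)$ as above, for any $\gamma \in [0,1]$ the function $\chi(x) = \gamma \cdot \mathbf{1}_{[-r,r]}(x)$ satisfies $\mathbf{1}_{\{u_r > 0\}}(x) \leq \chi(x) \leq \mathbf{1}_{\{u_r \geq 0\}}(x)$ for all $x \in \mathbb{R}$. -/
import Mathlib

open Set

theorem occupation_function_sandwich
    (w : ℝ → ℝ) (hw : ∀ y, w y = -|y|) (r : ℝ) (hr : 0 ≤ r)
    (uᵣ : ℝ → ℝ) (huᵣ : ∀ x, uᵣ x = sSup (w '' {y | |x - y| ≤ r}))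
    (γ : ℝ) (hγ : γ ∈ Icc (0:ℝ) 1)
    (χ : ℝ → ℝ) (hχ : ∀ x, χ x = γ * (Icc (-r) r).indicator (fun _ => (1:ℝ)) x) :
    ∀ x : ℝ,
      ({x : ℝ | uᵣ x > 0}).indicator (fun _ => (1:ℝ)) x ≤ χ x ∧
      χ x ≤ ({x : ℝ | uᵣ x ≥ 0}).indicator (fun _ => (1:ℝ)) x := by
  obtain ⟨hγ0, hγ1⟩ := hγ
  intro x
  have hle : uᵣ x ≤ 0 := by
    rw [huᵣ]
    apply Real.sSup_le _ le_rfl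
    rintro a ⟨y, _, rfl⟩
    rw [hw]; simp [abs_nonneg]
  have hχnn : 0 ≤ χ x := by
    rw [hχ]
    exact mul_nonneg hγ0 (Set.indicator_nonneg (fun _ _ => zero_le_one) x)
  constructor
  · rw [Set.indicator_of_notMem (show x ∉ {x | uᵣ x > 0} from not_lt.2 hle)]
    exact hχnn
  · by_cases hx : x ∈ Icc (-r) r
    · have hge : 0 ≤ uᵣ x := by
        rw [huᵣ]
        have hmem : (0:ℝ) ∈ w '' {y | |x - y| ≤ r} := by
          refine ⟨0, ?_, by rw [hw]; simp⟩
          simp only [sub_zero, mem_setOf_eq]; exact abs_le.2 (mem_Icc.1 hx)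
        have hbdd : BddAbove (w '' {y : ℝ | |x - y| ≤ r}) := by
          refine ⟨0, ?_⟩
          rintro a ⟨y, _, rfl⟩
          rw [hw]; simp [abs_nonneg]
        exact le_csSup hbdd hmem
      rw [Set.indicator_of_mem (show x ∈ {x | uᵣ x ≥ 0} from hge), hχ, Set.indicator_of_mem hx]
      simpa using hγ1
    · rw [hχ, Set.indicator_of_notMem hx, mul_zero]
      exact Set.indicator_nonneg (fun _ _ => zero_le_one) x
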